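/- For each α with 0 < α < 1 there exists a function f : ℝ → ℝ that is strictly C^{0,α}, and which is moreover even, 2-periodic, and bounded. -/

import Mathlib

open Set Filter Topology

/-- `f : ℝ → ℝ` is strictly `C^{0,α}`: it is `α`-Hölder with some constant `C > 0`, and for
every `β > α` and every `y`, `limsup_{x→y} |f x - f y| / |x - y|^β = ∞` (i.e. the difference
quotients are frequently larger than any bound near `y`). -/
def StrictlyHolder (f : ℝ → ℝ) (α : ℝ) : Prop :=
  (∃ C : ℝ, 0 < C ∧ ∀ x y : ℝ, |f x - f y| ≤ C * |x - y| ^ α) ∧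
  ∀ β : ℝ, α < β → ∀ y M : ℝ, ∃ᶠ x in 𝓝[≠] y, M < |f x - f y| / |x - y| ^ β


section AuxWeierstrass
open Finset


noncomputable def triw (x : ℝ) : ℝ := |x - round x|

lemma triw_nonneg (x : ℝ) : 0 ≤ triw x := abs_nonneg _
lemma triw_le_half (x : ℝ) : triw x ≤ 1/2 := by
  simpa [triw] using abs_sub_round x

lemma triw_le (x : ℝ) (n : ℤ) : triw x ≤ |x - n| := by
  rcases le_or_gt (1/2 : ℝ) |x - n| with h | h
  · exact (triw_le_half x).trans h
  · have hn : n = round x := by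
      have := abs_sub_round x
      have h1 : |(round x : ℝ) - n| < 1 := by
        calc |(round x : ℝ) - n| ≤ |(round x : ℝ) - x| + |x - n| := abs_sub_le _ _ _
          _ < 1/2 + 1/2 := by
              rw [abs_sub_comm]
              exact add_lt_add_of_le_of_lt this h
          _ = 1 := by norm_num
      have h2 := abs_lt.1 h1
      have : ((round x : ℝ) - n) = ((round x - n : ℤ) : ℝ) := by push_cast; ring
      rw [this] at h2
      have := h2.1; have := h2.2
      have ha : (-1:ℤ) < round x - n := by exact_mod_cast h2.1
      have hb : round x - n < (1:ℤ) := by exact_mod_cast h2.2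
      omega
    rw [hn, triw]

lemma triw_int (n : ℤ) : triw n = 0 := by simp [triw]

lemma triw_lip (u v : ℝ) : |triw u - triw v| ≤ |u - v| := by
  have h1 : triw u ≤ triw v + |u - v| := by
    calc triw u ≤ |u - round v| := triw_le u (round v)
      _ ≤ |u - v| + |v - round v| := by
          have := abs_sub_le u v (round v); linarith [this]
      _ = triw v + |u - v| := by rw [triw]; ring
  have h2 : triw v ≤ triw u + |u - v| := by
    calc triw v ≤ |v - round u| := triw_le v (round u)
      _ ≤ |v - u| + |u - round u| := by
          have := abs_sub_le v u (round u); linarith [this]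
      _ = triw u + |u - v| := by rw [triw, abs_sub_comm]; ring
  rw [abs_sub_le_iff]; constructor <;> linarith

lemma triw_add_int (x : ℝ) (n : ℤ) : triw (x + n) = triw x := by
  simp [triw, round_add_intCast]

lemma triw_neg (x : ℝ) : triw (-x) = triw x := by
  apply le_antisymm
  · calc triw (-x) ≤ |(-x) - (-(round x) : ℤ)| := triw_le _ _
      _ = triw x := by rw [triw]; push_cast; rw [abs_sub_comm]; ring_nf
  · calc triw x ≤ |x - (-(round (-x)) : ℤ)| := triw_le _ _
      _ = triw (-x) := by rw [triw]; push_cast; rw [abs_sub_comm]; ring_nf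

lemma triw_int_add_half (n : ℤ) : triw ((n : ℝ) + 1/2) = 1/2 := by
  have : triw ((1:ℝ)/2 + n) = triw (1/2) := triw_add_int _ n
  rw [add_comm] at this
  rw [this, triw]
  norm_num [round_eq]

noncomputable def wf (r : ℝ) (b : ℕ) (x : ℝ) : ℝ := ∑' n : ℕ, r^n * triw ((b:ℝ)^n * x)

variable {r : ℝ} {b : ℕ}

lemma abs_tsum_le {f : ℕ → ℝ} (h : Summable fun n => |f n|) : |∑' n, f n| ≤ ∑' n, |f n| := by
  simpa [Real.norm_eq_abs] using norm_tsum_le_tsum_norm (f := f) (by simpa [Real.norm_eq_abs] using h)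

lemma wf_summable (hr0 : 0 < r) (hr1 : r < 1) (x : ℝ) :
    Summable (fun n : ℕ => r^n * triw ((b:ℝ)^n * x)) := by
  apply Summable.of_nonneg_of_le (fun n => mul_nonneg (by positivity) (triw_nonneg _)) (fun n => ?_)
    (summable_geometric_of_lt_one hr0.le hr1)
  calc r^n * triw ((b:ℝ)^n * x) ≤ r^n * 1 := by
        apply mul_le_mul_of_nonneg_left ((triw_le_half _).trans (by norm_num)) (by positivity)
    _ = r^n := mul_one _

lemma wf_abs_le (hr0 : 0 < r) (hr1 : r < 1) (x : ℝ) : |wf r b x| ≤ 1/(1-r) := by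
  have h := wf_summable (b := b) hr0 hr1 x
  calc |wf r b x| ≤ ∑' n : ℕ, |r^n * triw ((b:ℝ)^n * x)| := by
        exact abs_tsum_le (by exact h.abs)
    _ ≤ ∑' n : ℕ, r^n := by
        apply Summable.tsum_le_tsum _ h.abs (summable_geometric_of_lt_one hr0.le hr1)
        intro n
        rw [abs_mul, abs_of_nonneg (by positivity), abs_of_nonneg (triw_nonneg _)]
        calc r^n * triw ((b:ℝ)^n * x) ≤ r^n * 1 := by
              apply mul_le_mul_of_nonneg_left ((triw_le_half _).trans (by norm_num)) (by positivity)
          _ = r^n := mul_one _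
    _ = 1/(1-r) := by rw [tsum_geometric_of_lt_one hr0.le hr1]; ring

lemma wf_even (x : ℝ) : wf r b (-x) = wf r b x := by
  unfold wf; congr 1; ext n; rw [mul_neg, triw_neg]

lemma wf_periodic (x : ℝ) : wf r b (x + 2) = wf r b x := by
  unfold wf; congr 1; ext n
  have : (b:ℝ)^n * (x + 2) = (b:ℝ)^n * x + ((2 * b^n : ℕ) : ℤ) := by push_cast; ring
  rw [this, triw_add_int]

lemma wf_diff_le (hr0 : 0 < r) (hr1 : r < 1) (x y : ℝ) (N : ℕ) :
    |wf r b x - wf r b y| ≤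
      (∑ n ∈ Finset.range N, (r * b)^n) * |x - y| + r^N * (2 * (1/(1-r))) := by
  have hx := wf_summable (b := b) hr0 hr1 x
  have hy := wf_summable (b := b) hr0 hr1 y
  have hsplit : ∀ z : ℝ, wf r b z = (∑ n ∈ Finset.range N, r^n * triw ((b:ℝ)^n * z)) +
      ∑' n : ℕ, r^(n+N) * triw ((b:ℝ)^(n+N) * z) := by
    intro z
    exact (Summable.sum_add_tsum_nat_add N (wf_summable hr0 hr1 z)).symm
  have tail_bound : ∀ z : ℝ, |∑' n : ℕ, r^(n+N) * triw ((b:ℝ)^(n+N) * z)| ≤ r^N * (1/(1-r)) := by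
    intro z
    have hs : Summable (fun n : ℕ => r^(n+N) * triw ((b:ℝ)^(n+N) * z)) :=
      (wf_summable hr0 hr1 z).comp_injective (add_left_injective N)
    calc |∑' n : ℕ, r^(n+N) * triw ((b:ℝ)^(n+N) * z)|
        ≤ ∑' n : ℕ, |r^(n+N) * triw ((b:ℝ)^(n+N) * z)| := abs_tsum_le (by exact hs.abs)
      _ ≤ ∑' n : ℕ, r^N * r^n := by
          apply Summable.tsum_le_tsum _ hs.abs
            ((summable_geometric_of_lt_one hr0.le hr1).mul_left _)
          intro n
          rw [abs_mul, abs_of_nonneg (by positivity), abs_of_nonneg (triw_nonneg _)]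
          calc r^(n+N) * triw ((b:ℝ)^(n+N) * z) ≤ r^(n+N) * 1 := by
                apply mul_le_mul_of_nonneg_left ((triw_le_half _).trans (by norm_num)) (by positivity)
            _ = r^N * r^n := by rw [mul_one, pow_add]; ring
      _ = r^N * (1/(1-r)) := by
          rw [tsum_mul_left, tsum_geometric_of_lt_one hr0.le hr1]; ring
  have head_bound : |(∑ n ∈ Finset.range N, r^n * triw ((b:ℝ)^n * x)) -
      ∑ n ∈ Finset.range N, r^n * triw ((b:ℝ)^n * y)| ≤
      (∑ n ∈ Finset.range N, (r * b)^n) * |x - y| := by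
    rw [← Finset.sum_sub_distrib, Finset.sum_mul]
    refine (Finset.abs_sum_le_sum_abs _ _).trans (Finset.sum_le_sum fun n _ => ?_)
    rw [← mul_sub, abs_mul, abs_of_nonneg (by positivity : (0:ℝ) ≤ r^n)]
    calc r^n * |triw ((b:ℝ)^n * x) - triw ((b:ℝ)^n * y)|
        ≤ r^n * |(b:ℝ)^n * x - (b:ℝ)^n * y| := by
          apply mul_le_mul_of_nonneg_left (triw_lip _ _) (by positivity)
      _ = (r * b)^n * |x - y| := by
          rw [← mul_sub, abs_mul, abs_of_nonneg (by positivity : (0:ℝ) ≤ (b:ℝ)^n),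
            mul_pow]; ring
  rw [hsplit x, hsplit y]
  set Hx := ∑ n ∈ Finset.range N, r^n * triw ((b:ℝ)^n * x) with hHx
  set Hy := ∑ n ∈ Finset.range N, r^n * triw ((b:ℝ)^n * y) with hHy
  set Tx := ∑' n : ℕ, r^(n+N) * triw ((b:ℝ)^(n+N) * x) with hTx
  set Ty := ∑' n : ℕ, r^(n+N) * triw ((b:ℝ)^(n+N) * y) with hTy
  have h1 : |Hx + Tx - (Hy + Ty)| ≤ |Hx - Hy| + (|Tx| + |Ty|) := by
    have : Hx + Tx - (Hy + Ty) = (Hx - Hy) + (Tx - Ty) := by ring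
    rw [this]
    exact (abs_add_le _ _).trans (by linarith [abs_sub Tx Ty, abs_sub_abs_le_abs_sub Tx Ty,
      (abs_sub _ _ : |Tx - Ty| ≤ |Tx| + |Ty|)])
  have h2 := tail_bound x
  have h3 := tail_bound y
  have h4 := head_bound
  calc |Hx + Tx - (Hy + Ty)| ≤ |Hx - Hy| + (|Tx| + |Ty|) := h1
    _ ≤ (∑ n ∈ Finset.range N, (r * b)^n) * |x - y| + r^N * (2 * (1/(1-r))) := by
        rw [hHx, hHy] at h4; linarith

lemma wf_holder {α : ℝ} (hα0 : 0 < α) (hα1 : α < 1) (hb : 1 < (b:ℝ))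
    (hr : r = (b:ℝ)^(-α)) (hb5 : 5 ≤ r * b) (x y : ℝ) :
    |wf r b x - wf r b y| ≤ ((b:ℝ)/(r*b-1) + 2/(1-r)) * |x - y| ^ α := by
  have hb0 : (0:ℝ) < b := by linarith
  have hr0 : 0 < r := hr ▸ Real.rpow_pos_of_pos hb0 _
  have hr1 : r < 1 := hr ▸ Real.rpow_lt_one_of_one_lt_of_neg hb (by linarith)
  have hrb1 : 1 < r * b := by linarith
  rcases eq_or_lt_of_le (abs_nonneg (x - y)) with h0 | h0
  · have hxy : x = y := by
      have : |x - y| = 0 := h0.symm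
      have := abs_eq_zero.1 this; linarith [this]
    simp [hxy, Real.zero_rpow (ne_of_gt hα0)]
  set h := |x - y| with hh
  have hex : ∃ N : ℕ, 1 ≤ (b:ℝ)^N * h := by
    obtain ⟨N, hN⟩ := pow_unbounded_of_one_lt (1/h) hb
    exact ⟨N, by rw [div_lt_iff₀ h0] at hN; linarith⟩
  set N := Nat.find hex with hNdef
  have hN : 1 ≤ (b:ℝ)^N * h := Nat.find_spec hex
  have key1 : r^N ≤ h ^ α := by
    have h1 : ((b:ℝ)^N)⁻¹ ≤ h := by
      rw [inv_le_iff_one_le_mul₀ (by positivity)]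
      linarith [hN]
    have h2 : (((b:ℝ)^N)⁻¹) ^ α ≤ h ^ α :=
      Real.rpow_le_rpow (by positivity) h1 hα0.le
    calc r^N = (((b:ℝ)^N)⁻¹) ^ α := by
          rw [hr, ← Real.rpow_natCast ((b:ℝ)^(-α)) N, ← Real.rpow_natCast (b:ℝ) N,
            ← Real.rpow_mul hb0.le, ← Real.rpow_neg hb0.le, ← Real.rpow_mul hb0.le]
          ring_nf
      _ ≤ h ^ α := h2
  have main := wf_diff_le (b := b) hr0 hr1 x y N
  rw [← hh] at main
  have tail2 : r^N * (2 * (1/(1-r))) ≤ (2/(1-r)) * h ^ α := by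
    have : 0 < 1 - r := by linarith
    have h1r : (0:ℝ) ≤ 2 * (1/(1-r)) := by
      have := one_div_pos.2 this; linarith
    calc r^N * (2 * (1/(1-r))) ≤ h^α * (2 * (1/(1-r))) :=
          mul_le_mul_of_nonneg_right key1 h1r
      _ = (2/(1-r)) * h ^ α := by ring
  rcases Nat.eq_zero_or_pos N with hN0 | hN0
  · rw [hN0] at main
    simp only [Finset.range_zero, Finset.sum_empty, zero_mul, zero_add, pow_zero] at main
    have : (0:ℝ) ≤ (b:ℝ)/(r*b-1) * h ^ α := by
      apply mul_nonneg (div_nonneg hb0.le (by linarith)) (Real.rpow_nonneg (abs_nonneg _) _)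
    rw [hN0] at tail2
    simp only [pow_zero] at tail2
    calc |wf r b x - wf r b y| ≤ 1 * (2 * (1/(1-r))) := main
      _ ≤ (2/(1-r)) * h ^ α := tail2
      _ ≤ ((b:ℝ)/(r*b-1) + 2/(1-r)) * h ^ α := by linarith [this]
  · have hprev : (b:ℝ)^(N-1) * h < 1 := by
      have := Nat.find_min hex (m := N - 1) (by omega)
      push_neg at this; exact this
    have hbNh : (b:ℝ)^N * h < b := by
      have : (b:ℝ)^N = b * (b:ℝ)^(N-1) := by
        rw [← pow_succ']; congr 1; omega
      rw [this, mul_assoc]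
      calc (b:ℝ) * ((b:ℝ)^(N-1) * h) < b * 1 := by
            exact mul_lt_mul_of_pos_left hprev hb0
        _ = b := mul_one _
    have hgeom : ∑ n ∈ Finset.range N, (r*b)^n ≤ (r*b)^N / (r*b-1) := by
      rw [geom_sum_eq (ne_of_gt hrb1)]
      apply div_le_div_of_nonneg_right _ (by linarith)
      linarith [pow_pos (by linarith : (0:ℝ) < r*b) N]
    have head2 : (∑ n ∈ Finset.range N, (r*b)^n) * h ≤ (b:ℝ)/(r*b-1) * h ^ α := by
      calc (∑ n ∈ Finset.range N, (r*b)^n) * h ≤ (r*b)^N / (r*b-1) * h := by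
            exact mul_le_mul_of_nonneg_right hgeom h0.le
        _ = (r^N * ((b:ℝ)^N * h)) / (r*b-1) := by rw [mul_pow]; ring
        _ ≤ (r^N * b) / (r*b-1) := by
            apply div_le_div_of_nonneg_right _ (by linarith)
            exact mul_le_mul_of_nonneg_left hbNh.le (by positivity)
        _ ≤ (h^α * b) / (r*b-1) := by
            apply div_le_div_of_nonneg_right _ (by linarith)
            exact mul_le_mul_of_nonneg_right key1 hb0.le
        _ = (b:ℝ)/(r*b-1) * h ^ α := by ring
    calc |wf r b x - wf r b y| ≤ (∑ n ∈ Finset.range N, (r*b)^n) * h + r^N * (2 * (1/(1-r))) := main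
      _ ≤ (b:ℝ)/(r*b-1) * h ^ α + (2/(1-r)) * h ^ α := add_le_add head2 tail2
      _ = ((b:ℝ)/(r*b-1) + 2/(1-r)) * h ^ α := by ring

lemma wf_lower (hr0 : 0 < r) (hr1 : r < 1) (hbe : Even b) (hb : 1 < (b:ℝ))
    (hb5 : 5 ≤ r * b) (y : ℝ) (k : ℕ) :
    ∃ z : ℝ, z ≠ y ∧ |z - y| ≤ ((b:ℝ)^k)⁻¹ ∧ (3/16) * r^k ≤ |wf r b z - wf r b y| := by
  have hb0 : (0:ℝ) < b := by linarith
  set B : ℝ := (b:ℝ)^k with hB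
  have hB0 : 0 < B := by positivity
  set q : ℤ := round (B * y) with hq
  set x' : ℝ := q / B with hx'
  set x : ℝ := ((q:ℝ) + 1/2) / B with hx
  -- tail of wf at x' vanishes
  have hx'_tail : ∀ n : ℕ, r^(n+k) * triw ((b:ℝ)^(n+k) * x') = 0 := by
    intro n
    have : (b:ℝ)^(n+k) * x' = ((b^n * q : ℤ) : ℝ) := by
      rw [hx', hB, pow_add]
      field_simp
      push_cast; ring
    rw [this, triw_int, mul_zero]
  have hfx' : wf r b x' = ∑ n ∈ Finset.range k, r^n * triw ((b:ℝ)^n * x') := by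
    rw [wf, (Summable.sum_add_tsum_nat_add k (wf_summable (b := b) hr0 hr1 x')).symm]
    simp only [hx'_tail, tsum_zero, add_zero]
  -- tail of wf at x is r^k/2
  obtain ⟨c, hc⟩ := hbe
  have hfx_tail : ∑' n : ℕ, r^(n+k) * triw ((b:ℝ)^(n+k) * x) = r^k * (1/2) := by
    rw [tsum_eq_single 0]
    · have h1 : (b:ℝ)^(0+k) * x = (q:ℝ) + 1/2 := by
        rw [hx, hB, zero_add]; field_simp
      rw [h1, zero_add, triw_int_add_half q]
    · intro n hn
      have hbn : (b:ℝ)^n = 2 * (c * (b:ℝ)^(n-1)) := by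
        have : (b:ℝ)^n = (b:ℝ)^(n-1) * b := by
          rw [← pow_succ]; congr 1; omega
        rw [this]
        have : (b:ℝ) = 2 * c := by rw [hc]; push_cast; ring
        rw [this]; ring
      have e1 : (b:ℝ)^(n+k) * x = (b:ℝ)^n * ((q:ℝ) + 1/2) := by
        rw [hx, hB, pow_add]
        field_simp
      have h2 : (b:ℝ)^(n+k) * x = ((b^n * q + c * b^(n-1) : ℤ) : ℝ) := by
        rw [e1]; push_cast; rw [hbn]; push_cast; ring
      rw [h2, triw_int, mul_zero]
  have hfx : wf r b x = (∑ n ∈ Finset.range k, r^n * triw ((b:ℝ)^n * x)) + r^k * (1/2) := by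
    rw [wf, (Summable.sum_add_tsum_nat_add k (wf_summable (b := b) hr0 hr1 x)).symm, hfx_tail]
  -- distance between x and x'
  have hxx' : |x - x'| = 1/(2*B) := by
    rw [hx, hx']
    rw [div_sub_div_same, abs_div, abs_of_pos hB0]
    have : (q:ℝ) + 1/2 - q = 1/2 := by ring
    rw [this]
    rw [abs_of_pos (by norm_num : (0:ℝ) < 1/2)]
    ring
  -- head difference bound
  have hrb1 : 1 < r * b := by linarith
  have head_bd : |(∑ n ∈ Finset.range k, r^n * triw ((b:ℝ)^n * x)) -
      ∑ n ∈ Finset.range k, r^n * triw ((b:ℝ)^n * x')| ≤ r^k / 8 := by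
    rw [← Finset.sum_sub_distrib]
    calc |∑ n ∈ Finset.range k, (r^n * triw ((b:ℝ)^n * x) - r^n * triw ((b:ℝ)^n * x'))|
        ≤ ∑ n ∈ Finset.range k, |r^n * triw ((b:ℝ)^n * x) - r^n * triw ((b:ℝ)^n * x')| :=
          Finset.abs_sum_le_sum_abs _ _
      _ ≤ ∑ n ∈ Finset.range k, (r*b)^n * (1/(2*B)) := by
          apply Finset.sum_le_sum
          intro n _
          rw [← mul_sub, abs_mul, abs_of_nonneg (by positivity : (0:ℝ) ≤ r^n)]
          calc r^n * |triw ((b:ℝ)^n * x) - triw ((b:ℝ)^n * x')|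
              ≤ r^n * |(b:ℝ)^n * x - (b:ℝ)^n * x'| :=
                mul_le_mul_of_nonneg_left (triw_lip _ _) (by positivity)
            _ = (r*b)^n * |x - x'| := by
                rw [← mul_sub, abs_mul, abs_of_nonneg (by positivity : (0:ℝ) ≤ (b:ℝ)^n), mul_pow]
                ring
            _ = (r*b)^n * (1/(2*B)) := by rw [hxx']
      _ = (∑ n ∈ Finset.range k, (r*b)^n) * (1/(2*B)) := by rw [← Finset.sum_mul]
      _ ≤ ((r*b)^k / (r*b-1)) * (1/(2*B)) := by
          apply mul_le_mul_of_nonneg_right _ (by positivity)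
          rw [geom_sum_eq (ne_of_gt hrb1)]
          apply div_le_div_of_nonneg_right _ (by linarith)
          linarith [pow_pos (by linarith : (0:ℝ) < r*b) k]
      _ ≤ ((r*b)^k / 4) * (1/(2*B)) := by
          apply mul_le_mul_of_nonneg_right _ (by positivity)
          apply div_le_div_of_nonneg_left (by positivity) (by norm_num) (by linarith)
      _ = r^k / 8 := by
          rw [mul_pow, hB]
          field_simp
          ring
  -- |wf x - wf x'| ≥ 3/8 r^k
  have hdiff : 3/8 * r^k ≤ |wf r b x - wf r b x'| := by
    rw [hfx, hfx']
    set Hx := ∑ n ∈ Finset.range k, r^n * triw ((b:ℝ)^n * x)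
    set Hx' := ∑ n ∈ Finset.range k, r^n * triw ((b:ℝ)^n * x')
    have : Hx + r^k * (1/2) - Hx' = r^k * (1/2) + (Hx - Hx') := by ring
    rw [this]
    have h2 : |r^k * (1/2)| = r^k * (1/2) := abs_of_pos (by positivity)
    have hrk : 0 < r^k := by positivity
    calc 3/8 * r^k = r^k * (1/2) - r^k/8 := by ring
      _ ≤ |r^k * (1/2)| - |Hx - Hx'| := by rw [h2]; linarith [head_bd]
      _ ≤ |r^k * (1/2) + (Hx - Hx')| := by
          have := abs_add_le (r^k * (1/2) + (Hx - Hx')) (-(Hx - Hx'))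
          simp only [add_neg_cancel_right, abs_neg] at this
          linarith
  -- pick z among x, x'
  have tri : 3/8 * r^k ≤ |wf r b x - wf r b y| + |wf r b x' - wf r b y| := by
    calc 3/8 * r^k ≤ |wf r b x - wf r b x'| := hdiff
      _ ≤ |wf r b x - wf r b y| + |wf r b y - wf r b x'| := abs_sub_le _ _ _
      _ = |wf r b x - wf r b y| + |wf r b x' - wf r b y| := by rw [abs_sub_comm (wf r b y)]
  have hqy : |(q:ℝ) - B * y| ≤ 1/2 := by
    rw [hq, abs_sub_comm]
    exact abs_sub_round (B * y)
  have hx'y : |x' - y| ≤ ((b:ℝ)^k)⁻¹ := by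
    rw [hx', ← hB]
    have : (q:ℝ)/B - y = ((q:ℝ) - B*y)/B := by field_simp
    rw [this, abs_div, abs_of_pos hB0, div_le_iff₀ hB0]
    calc |(q:ℝ) - B*y| ≤ 1/2 := hqy
      _ ≤ 1 := by norm_num
      _ = B⁻¹ * B := by field_simp
  have hxy : |x - y| ≤ ((b:ℝ)^k)⁻¹ := by
    rw [hx, ← hB]
    have : ((q:ℝ)+1/2)/B - y = (((q:ℝ) - B*y) + 1/2)/B := by field_simp; ring
    rw [this, abs_div, abs_of_pos hB0, div_le_iff₀ hB0]
    calc |((q:ℝ) - B*y) + 1/2| ≤ |(q:ℝ) - B*y| + |1/2| := abs_add_le _ _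
      _ ≤ 1/2 + 1/2 := by
          have : |(1:ℝ)/2| = 1/2 := by norm_num
          linarith [hqy, this.le]
      _ = B⁻¹ * B := by field_simp; norm_num
  have hrk : 0 < r^k := by positivity
  rcases le_or_gt (3/16 * r^k) (|wf r b x - wf r b y|) with hc1 | hc1
  · refine ⟨x, ?_, hxy, hc1⟩
    intro he
    rw [he] at hc1
    simp at hc1
    linarith
  · have hc2 : 3/16 * r^k ≤ |wf r b x' - wf r b y| := by linarith
    refine ⟨x', ?_, hx'y, hc2⟩
    intro he
    rw [he] at hc2
    simp at hc2
    linarith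

end AuxWeierstrass

/-- For each `0 < α < 1` there is a strictly `C^{0,α}` function `f : ℝ → ℝ` that is even,
`2`-periodic, and bounded. -/
theorem exists_strictlyHolder_even_periodic_bounded (α : ℝ) (hα0 : 0 < α) (hα1 : α < 1) :
    ∃ f : ℝ → ℝ, StrictlyHolder f α ∧ (∀ x, f (-x) = f x) ∧ (∀ x, f (x + 2) = f x) ∧
      ∃ B : ℝ, ∀ x, |f x| ≤ B := by
  have h1α : (0:ℝ) < 1 - α := by linarith
  -- choose the base b
  obtain ⟨m, hm⟩ := exists_nat_ge ((5:ℝ) ^ ((1:ℝ)/(1-α)))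
  set b : ℕ := 2*m + 2 with hbdef
  have hb : 1 < (b:ℝ) := by
    have : (2:ℝ) ≤ b := by rw [hbdef]; push_cast; linarith [Nat.cast_nonneg (α := ℝ) m]
    linarith
  have hb0 : (0:ℝ) < b := by linarith
  have hbe : Even b := ⟨m+1, by omega⟩
  set r : ℝ := (b:ℝ) ^ (-α) with hrdef
  have hr0 : 0 < r := Real.rpow_pos_of_pos hb0 _
  have hr1 : r < 1 := Real.rpow_lt_one_of_one_lt_of_neg hb (by linarith)
  have hrb : r * b = (b:ℝ) ^ (1-α) := by
    rw [hrdef]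
    nth_rewrite 2 [show (b:ℝ) = (b:ℝ) ^ (1:ℝ) from (Real.rpow_one _).symm]
    rw [← Real.rpow_add hb0]
    ring_nf
  have hb5 : 5 ≤ r * b := by
    rw [hrb]
    have hbge : (5:ℝ) ^ ((1:ℝ)/(1-α)) ≤ b := by
      calc (5:ℝ) ^ ((1:ℝ)/(1-α)) ≤ m := hm
        _ ≤ b := by rw [hbdef]; push_cast; linarith [Nat.cast_nonneg (α := ℝ) m]
    calc (5:ℝ) = ((5:ℝ) ^ ((1:ℝ)/(1-α))) ^ (1-α) := by
          rw [← Real.rpow_mul (by norm_num : (0:ℝ) ≤ 5)]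
          rw [one_div, inv_mul_cancel₀ (ne_of_gt h1α), Real.rpow_one]
      _ ≤ (b:ℝ) ^ (1-α) :=
          Real.rpow_le_rpow (Real.rpow_nonneg (by norm_num) _) hbge h1α.le
  refine ⟨wf r b, ⟨⟨(b:ℝ)/(r*b-1) + 2/(1-r), ?_, fun x y => wf_holder hα0 hα1 hb hrdef hb5 x y⟩, ?_⟩,
    wf_even, wf_periodic, 1/(1-r), fun x => wf_abs_le hr0 hr1 x⟩
  · have : 0 < (b:ℝ)/(r*b-1) := div_pos hb0 (by linarith)
    have : 0 < 2/(1-r) := div_pos (by norm_num) (by linarith)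
    linarith [div_pos hb0 (by linarith : (0:ℝ) < r*b-1)]
  · intro β hβ y M
    rw [Filter.frequently_iff]
    intro U hU
    rw [Metric.mem_nhdsWithin_iff] at hU
    obtain ⟨ε, hε, hsub⟩ := hU
    -- choose k
    set Q : ℝ := (b:ℝ) ^ (β - α) with hQdef
    have hQ : 1 < Q := Real.one_lt_rpow_iff_of_pos hb0 |>.2 (Or.inl ⟨hb, by linarith⟩)
    obtain ⟨k1, hk1⟩ := exists_pow_lt_of_lt_one hε (show (b:ℝ)⁻¹ < 1 by
      rw [inv_lt_one_iff₀]; right; exact hb)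
    obtain ⟨k2, hk2⟩ := pow_unbounded_of_one_lt (M * (16/3)) hQ
    set k : ℕ := max k1 k2 with hk
    have hinv : ((b:ℝ)^k)⁻¹ < ε := by
      calc ((b:ℝ)^k)⁻¹ = ((b:ℝ)⁻¹)^k := by rw [inv_pow]
        _ ≤ ((b:ℝ)⁻¹)^k1 :=
            pow_le_pow_of_le_one (by positivity) (by rw [inv_le_one_iff₀]; right; exact hb.le)
              (le_max_left _ _)
        _ < ε := hk1
    have hM : M < 3/16 * Q^k := by
      have : Q^k2 ≤ Q^k := pow_le_pow_right₀ hQ.le (le_max_right _ _)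
      nlinarith [this, hk2]
    obtain ⟨z, hzne, hzd, hzf⟩ := wf_lower hr0 hr1 hbe hb hb5 y k
    refine ⟨z, hsub ⟨?_, hzne⟩, ?_⟩
    · rw [Metric.mem_ball, Real.dist_eq]
      exact lt_of_le_of_lt hzd hinv
    · -- the quotient bound
      have hzy : 0 < |z - y| := abs_pos.2 (sub_ne_zero.2 hzne)
      have hβ0 : 0 < β := lt_trans hα0 hβ
      have hpow : |z - y| ^ β ≤ (((b:ℝ)^k)⁻¹) ^ β :=
        Real.rpow_le_rpow hzy.le hzd hβ0.le
      have hppos : 0 < |z - y| ^ β := Real.rpow_pos_of_pos hzy _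
      have hqpos : 0 < (((b:ℝ)^k)⁻¹ : ℝ) ^ β := Real.rpow_pos_of_pos (by positivity) _
      have key : (3/16 * r^k) / (((b:ℝ)^k)⁻¹) ^ β ≤ |wf r b z - wf r b y| / |z - y| ^ β := by
        apply div_le_div₀ (abs_nonneg _) hzf hppos hpow
      have hcomp : (3/16 * r^k) / (((b:ℝ)^k)⁻¹) ^ β = 3/16 * Q^k := by
        have e1 : r^k = (b:ℝ) ^ ((-α) * (k:ℝ)) := by
          rw [hrdef, ← Real.rpow_natCast ((b:ℝ)^(-α)) k, ← Real.rpow_mul hb0.le]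
        have e2 : (((b:ℝ)^k)⁻¹) ^ β = (b:ℝ) ^ ((-(k:ℝ)) * β) := by
          rw [← Real.rpow_natCast (b:ℝ) k, ← Real.rpow_neg hb0.le, ← Real.rpow_mul hb0.le]
        have e3 : Q^k = (b:ℝ) ^ ((β - α) * (k:ℝ)) := by
          rw [hQdef, ← Real.rpow_natCast ((b:ℝ)^(β-α)) k, ← Real.rpow_mul hb0.le]
        rw [e1, e2, e3, mul_div_assoc, ← Real.rpow_sub hb0]
        congr 1
        ring
      rw [hcomp] at key
      exact lt_of_lt_of_le hM key
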